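/- In the reduction above, for every input I of DE^G_k, every node u of G, and every a ∈ [k], the element g(u,a) is in the closure of {1} under T^I if and only if val(u)[I] = a. Similarly, for every arc vu, g(vu,a) is generated by T^I iff val(v)[I] = a. -/
import Mathlib


/-- A deterministic `k`-way branching program with variables `Var` and outputs `Out`.
States are either query states (labeled by `query`, with `k` out-edges given by `next`)
or output states (where `out` is `some o`). -/
structure BP (Var : Type) (k : ℕ) (Out : Type) where
  State : Type
  [finState : Fintype State]
  start : State
  query : State → Var
  next : State → Fin k → State
  out : State → Option Out

namespace BP

variable {Var Out : Type} {k : ℕ}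

/-- The number of states. -/
noncomputable def size (B : BP Var k Out) : ℕ := @Fintype.card B.State B.finState

/-- The computation path of input `I`. -/
def path (B : BP Var k Out) (I : Var → Fin k) : ℕ → B.State
  | 0 => B.start
  | t + 1 => B.next (B.path I t) (I (B.query (B.path I t)))

/-- The computation of `I` is still running at time `t`: no output state was reached earlier. -/
def VisitsAt (B : BP Var k Out) (I : Var → Fin k) (t : ℕ) : Prop :=
  ∀ s < t, B.out (B.path I s) = none

/-- State `q` is on the computation path of input `I`. -/
def Visits (B : BP Var k Out) (I : Var → Fin k) (q : B.State) : Prop :=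
  ∃ t, B.VisitsAt I t ∧ B.path I t = q

/-- `B` computes the function `g`. -/
def Computes (B : BP Var k Out) (g : (Var → Fin k) → Out) : Prop :=
  ∀ I, ∃ t, B.VisitsAt I t ∧ B.out (B.path I t) = some (g I)

end BP

/-- A rooted dag in which every internal node has an ordered pair of children (left, right).
`children u = none` means `u` is a leaf; the root is the unique node that is nobody's child. -/
structure BinDag where
  n : ℕ
  children : Fin n → Option (Fin n × Fin n)
  wf : WellFounded fun v u : Fin n => ∃ c, children u = some c ∧ (v = c.1 ∨ v = c.2)
  root : Fin n
  root_no_parent : ∀ u c, children u = some c → c.1 ≠ root ∧ c.2 ≠ root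
  root_unique : ∀ u, u ≠ root → ∃ p c, children p = some c ∧ (u = c.1 ∨ u = c.2)

namespace BinDag

/-- The child relation: `v` is a child of `u`. -/
def childRel (G : BinDag) : Fin G.n → Fin G.n → Prop :=
  fun v u => ∃ c, G.children u = some c ∧ (v = c.1 ∨ v = c.2)

/-- The `DE^G_k` variables for a binary dag: a leaf variable `l_u` for each leaf `u`, and a
variable `f_u(b₁, b₂)` for each internal node `u` and `b₁, b₂ ∈ [k]`. -/
def Var (G : BinDag) (k : ℕ) : Type :=
  {u : Fin G.n // G.children u = none} ⊕
    (Σ _u : {u : Fin G.n // (G.children u).isSome}, Fin k × Fin k)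

/-- The value of each node under input `I`: leaves take their `l` value, and an internal node
applies its function to the values of its two children. -/
noncomputable def val (G : BinDag) {k : ℕ} (I : G.Var k → Fin k) : Fin G.n → Fin k :=
  WellFounded.fix (C := fun _ => Fin k) G.wf fun u ih =>
    match h : G.children u with
    | none => I (Sum.inl ⟨u, h⟩)
    | some c => I (Sum.inr ⟨⟨u, by rw [h]; rfl⟩,
        (ih c.1 ⟨c, h, Or.inl rfl⟩, ih c.2 ⟨c, h, Or.inr rfl⟩)⟩)

/-- `B` solves `DE^G_k` for a binary dag `G`: on every input it halts and outputs `true` iff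
the value of the root is `1` (the first element of `[k]`). -/
def SolvesDE (G : BinDag) {k : ℕ} (hk : 0 < k) (B : BP (G.Var k) k Bool) : Prop :=
  ∀ I : G.Var k → Fin k, ∃ t, B.VisitsAt I t ∧
    B.out (B.path I t) = some (decide (G.val I G.root = ⟨0, hk⟩))

/-- `B` is thrifty: whenever a state querying `f_u(b₁, b₂)` is visited by input `I`, then
`(b₁, b₂)` is exactly the pair of values of the children of `u` under `I`. -/
def Thrifty (G : BinDag) {k : ℕ} (B : BP (G.Var k) k Bool) : Prop :=
  ∀ (I : G.Var k → Fin k) (q : B.State) (u : {u : Fin G.n // (G.children u).isSome})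
    (b : Fin k × Fin k), B.Visits I q → B.query q = Sum.inr ⟨u, b⟩ →
    ∀ c, G.children u.1 = some c → b.1 = G.val I c.1 ∧ b.2 = G.val I c.2

end BinDag

/-- The closure of `{1}` under the binary operation `T` on `[m]` (element `j ∈ [m]` is
represented by the index `j - 1 : Fin m`, so `1` is index `0`). -/
inductive Generated {m : ℕ} (T : Fin m → Fin m → Fin m) : Fin m → Prop
  | one (h : 0 < m) : Generated T ⟨0, h⟩
  | app {x y : Fin m} : Generated T x → Generated T y → Generated T (T x y)

/-- `B` solves `GEN(m)`: on every instance `T : [m]×[m] → [m]` it halts and outputs `true`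
iff `m` (index `m - 1`) is in the closure of `{1}` under `T`. -/
def SolvesGEN {m : ℕ} (hm : 0 < m) (B : BP (Fin m × Fin m) m Bool) : Prop :=
  ∀ T : Fin m × Fin m → Fin m, ∃ t b, B.VisitsAt T t ∧ B.out (B.path T t) = some b ∧
    (b = true ↔ Generated (fun x y => T (x, y)) ⟨m - 1, Nat.sub_lt hm one_pos⟩)

/-- `B` is semantic-incremental: for every state `q` querying variable `(x, y)` and every
input `T` whose computation path visits `q`, each of `x`, `y` is either `1` (index `0`) or
labels an earlier edge on `T`'s computation path (edge labels are the answers to the queries). -/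
def SemIncr {m : ℕ} (B : BP (Fin m × Fin m) m Bool) : Prop :=
  ∀ (T : Fin m × Fin m → Fin m) (t : ℕ), B.VisitsAt T t → B.out (B.path T t) = none →
    ∀ z ∈ ({(B.query (B.path T t)).1, (B.query (B.path T t)).2} : Set (Fin m)),
      (z : ℕ) = 0 ∨ ∃ s < t, T (B.query (B.path T s)) = z

/-- The static data of the reduction from `DE^G_k` to `GEN(m)`, `m = 3kn + n + 1`.
Element `j ∈ [m]` is represented by the index `j - 1 : Fin m` (so `1` is index `0`); node
`u : Fin n` (i.e., node `u+1 ∈ [n]`) is the element with index `u`.  The leaves are listed in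
a fixed order `w 0, …, w (l-1)`.  The elements `{n+2, …, m}` (indices `≥ n+1`) are injectively
assigned names `gN u a` ("node `u` has value `a`") and `gA u s a` ("value `a` flows along the
left (`s = false`) or right (`s = true`) in-arc of `u`"), with `gN root 1 = m` (index `m-1`). -/
structure RedSetup (G : BinDag) (k : ℕ) where
  hn : 2 ≤ G.n
  hk : 2 ≤ k
  hdisj : ∀ u c, G.children u = some c → c.1 ≠ c.2
  m : ℕ
  hm : m = 3 * k * G.n + G.n + 1
  l : ℕ
  w : Fin l → Fin G.n
  w_leaf : ∀ t, G.children (w t) = none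
  w_inj : Function.Injective w
  w_surj : ∀ u, G.children u = none → ∃ t, w t = u
  gN : Fin G.n → Fin k → Fin m
  gA : Fin G.n → Bool → Fin k → Fin m
  g_inj : Function.Injective fun x : (Fin G.n × Fin k) ⊕ (Fin G.n × Bool × Fin k) =>
    match x with
    | .inl (u, a) => gN u a
    | .inr (u, s, a) => gA u s a
  g_range_N : ∀ u a, G.n + 1 ≤ (gN u a : ℕ)
  g_range_A : ∀ u s a, G.n + 1 ≤ (gA u s a : ℕ)
  g_root : (gN G.root ⟨0, by omega⟩ : ℕ) = m - 1

namespace RedSetup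

variable {G : BinDag} {k : ℕ}

theorem m_pos (R : RedSetup G k) : 0 < R.m := R.hm ▸ Nat.succ_pos _

theorem lt_m (R : RedSetup G k) {j : ℕ} (h : j ≤ G.n + 1) : j < R.m := by
  have h1 : 2 * 2 ≤ k * G.n := Nat.mul_le_mul R.hk R.hn
  have h2 : R.m = 3 * (k * G.n) + G.n + 1 := by rw [R.hm, Nat.mul_assoc]
  omega

/-- The element with index `j` of `[m]`. -/
def el (R : RedSetup G k) (j : ℕ) (h : j < R.m) : Fin R.m := ⟨j, h⟩

/-- The pairs `(x, y)` that are "used", i.e., appear as the left-hand side of one of the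
explicit defining equations of `T^I`. -/
def Used (R : RedSetup G k) (x y : Fin R.m) : Prop :=
  ((x : ℕ) = 0 ∧ (y : ℕ) < G.n) ∨
  ((x : ℕ) = 0 ∧ (y : ℕ) = G.n) ∨
  ((x : ℕ) = 0 ∧ ∃ (t : ℕ) (ht : t + 1 < R.l) (a : Fin k),
      y = R.gN (R.w ⟨t, by omega⟩) a) ∨
  (∃ (u : Fin G.n) (c : Fin G.n × Fin G.n) (a : Fin k), G.children u = some c ∧
      (x : ℕ) = (u : ℕ) + 1 ∧ (y = R.gN c.1 a ∨ y = R.gN c.2 a)) ∨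
  (∃ (u : Fin G.n) (c : Fin G.n × Fin G.n) (b₁ b₂ : Fin k), G.children u = some c ∧
      x = R.gA u false b₁ ∧ y = R.gA u true b₂)

/-- `T` is the `GEN(m)` instance `T^I` associated to the `DE^G_k` input `I` by the reduction:
`T(1, u) = u + 1` for `u ∈ [n]`; `T(1, n+1) = gN (w 1) (l_{w 1})`;
`T(1, gN (w t) a) = gN (w (t+1)) (l_{w (t+1)})`; for internal `u` with children `(v₁, v₂)`:
`T(u + 1, gN vᵢ a) = gA u side a` and `T(gA u false b₁, gA u true b₂) = gN u (f_u(b₁, b₂))`;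
all unused variables are set to `1`. -/
def Defines (R : RedSetup G k) (I : G.Var k → Fin k) (T : Fin R.m → Fin R.m → Fin R.m) :
    Prop :=
  (∀ u : Fin G.n, T (R.el 0 R.m_pos) (R.el u (R.lt_m (by omega)))
      = R.el ((u : ℕ) + 1) (R.lt_m (by omega))) ∧
  (∀ h0 : 0 < R.l, T (R.el 0 R.m_pos) (R.el G.n (R.lt_m (by omega)))
      = R.gN (R.w ⟨0, h0⟩) (G.val I (R.w ⟨0, h0⟩))) ∧
  (∀ (t : ℕ) (ht : t + 1 < R.l) (a : Fin k),
      T (R.el 0 R.m_pos) (R.gN (R.w ⟨t, by omega⟩) a)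
        = R.gN (R.w ⟨t + 1, ht⟩) (G.val I (R.w ⟨t + 1, ht⟩))) ∧
  (∀ (u : Fin G.n) (c : Fin G.n × Fin G.n) (a : Fin k), G.children u = some c →
      T (R.el ((u : ℕ) + 1) (R.lt_m (by omega))) (R.gN c.1 a) = R.gA u false a ∧
      T (R.el ((u : ℕ) + 1) (R.lt_m (by omega))) (R.gN c.2 a) = R.gA u true a) ∧
  (∀ (u : Fin G.n) (c : Fin G.n × Fin G.n) (b₁ b₂ : Fin k) (h : G.children u = some c),
      T (R.gA u false b₁) (R.gA u true b₂)
        = R.gN u (I (Sum.inr ⟨⟨u, by rw [h]; rfl⟩, (b₁, b₂)⟩))) ∧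
  (∀ x y, ¬ R.Used x y → T x y = R.el 0 R.m_pos)

end RedSetup

namespace RedSetup

variable {G : BinDag} {k : ℕ} (R : RedSetup G k)

lemma gN_inj {u u' : Fin G.n} {a a' : Fin k} (h : R.gN u a = R.gN u' a') :
    u = u' ∧ a = a' := by
  have := R.g_inj (a₁ := Sum.inl (u, a)) (a₂ := Sum.inl (u', a')) h
  simp at this; exact this

lemma gA_inj {u u' : Fin G.n} {s s' : Bool} {a a' : Fin k}
    (h : R.gA u s a = R.gA u' s' a') : u = u' ∧ s = s' ∧ a = a' := by
  have := R.g_inj (a₁ := Sum.inr (u, s, a)) (a₂ := Sum.inr (u', s', a')) h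
  simp at this; tauto

lemma gN_ne_gA {u u' : Fin G.n} {s : Bool} {a a' : Fin k} :
    R.gN u a ≠ R.gA u' s a' := by
  intro h
  have := R.g_inj (a₁ := Sum.inl (u, a)) (a₂ := Sum.inr (u', s, a')) h
  simp at this

lemma val_node (I : G.Var k → Fin k) (u : Fin G.n) (c : Fin G.n × Fin G.n)
    (h : G.children u = some c) :
    G.val I u = I (Sum.inr ⟨⟨u, by rw [h]; rfl⟩, (G.val I c.1, G.val I c.2)⟩) := by
  show WellFounded.fix _ _ u = _
  rw [WellFounded.fix_eq]
  split
  · next h' => rw [h] at h'; exact absurd h' (by simp)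
  · next c' h' =>
    rw [h] at h'; cases h'
    rfl

/-- The invariant preserved by generation. -/
def GoodElt (I : G.Var k → Fin k) (x : Fin R.m) : Prop :=
  (x : ℕ) ≤ G.n ∨
  (∃ u, x = R.gN u (G.val I u)) ∨
  (∃ u c s, G.children u = some c ∧
    x = R.gA u s (G.val I (if s then c.2 else c.1)))

lemma l_pos : 0 < R.l := by
  obtain ⟨u, -, hmin⟩ := G.wf.has_min Set.univ ⟨G.root, trivial⟩
  have hleaf : G.children u = none := by
    cases hc : G.children u with
    | none => rfl
    | some c => exact absurd ⟨c, hc, Or.inl rfl⟩ (hmin c.1 trivial)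
  obtain ⟨t, -⟩ := R.w_surj u hleaf
  exact t.pos

variable {I : G.Var k → Fin k} {T : Fin R.m → Fin R.m → Fin R.m}

lemma good_one : R.GoodElt I (R.el 0 R.m_pos) := Or.inl (by simp [RedSetup.el])

lemma good_closed (hT : R.Defines I T) {x y : Fin R.m}
    (hx : R.GoodElt I x) (hy : R.GoodElt I y) : R.GoodElt I (T x y) := by
  obtain ⟨h1, h2, h3, h4, h5, h6⟩ := hT
  by_cases hu : R.Used x y
  · rcases hu with ⟨hx0, hyn⟩ | ⟨hx0, hyn⟩ | ⟨hx0, t, ht, a, hy'⟩ |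
      ⟨u, c, a, hc, hxu, hy'⟩ | ⟨u, c, b₁, b₂, hc, hx', hy'⟩
    · -- T(1, u) = u+1
      have hx' : x = R.el 0 R.m_pos := Fin.ext hx0
      have hy'' : y = R.el (y : ℕ) (R.lt_m (by omega)) := rfl
      rw [hx', hy'', h1 ⟨(y : ℕ), hyn⟩]
      exact Or.inl (by simp [RedSetup.el]; omega)
    · -- T(1, n+1)
      have hx' : x = R.el 0 R.m_pos := Fin.ext hx0
      have hy'' : y = R.el G.n (R.lt_m (by omega)) := Fin.ext hyn
      rw [hx', hy'', h2 R.l_pos]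
      exact Or.inr (Or.inl ⟨_, rfl⟩)
    · -- T(1, gN (w t) a)
      have hx' : x = R.el 0 R.m_pos := Fin.ext hx0
      rw [hx', hy', h3 t ht a]
      exact Or.inr (Or.inl ⟨_, rfl⟩)
    · -- T(u+1, gN cᵢ a)
      rcases hy with hle | ⟨v, hv⟩ | ⟨v, c', s, hc', hv⟩
      · rcases hy' with hy' | hy' <;> rw [hy'] at hle <;>
          [exact absurd (R.g_range_N c.1 a) (by omega);
           exact absurd (R.g_range_N c.2 a) (by omega)]
      · have hx' : x = R.el ((u : ℕ) + 1) (R.lt_m (by omega)) := Fin.ext hxu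
        rcases hy' with hy' | hy'
        · obtain ⟨hv1, hv2⟩ := R.gN_inj (hy'.symm.trans hv)
          rw [hx', hy', (h4 u c a hc).1]
          refine Or.inr (Or.inr ⟨u, c, false, hc, ?_⟩)
          simp only [Bool.false_eq_true, if_false, hv2, ← hv1]
        · obtain ⟨hv1, hv2⟩ := R.gN_inj (hy'.symm.trans hv)
          rw [hx', hy', (h4 u c a hc).2]
          refine Or.inr (Or.inr ⟨u, c, true, hc, ?_⟩)
          simp only [if_true, hv2, ← hv1]
      · rcases hy' with hy' | hy' <;>
          exact absurd (hy'.symm.trans hv) R.gN_ne_gA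
    · -- T(gA u false b₁, gA u true b₂)
      rcases hx with hle | ⟨v, hv⟩ | ⟨v, c', s, hc', hv⟩
      · rw [hx'] at hle; exact absurd (R.g_range_A u false b₁) (by omega)
      · exact absurd (hx'.symm.trans hv).symm R.gN_ne_gA
      · obtain ⟨hv1, hv2, hv3⟩ := R.gA_inj (hx'.symm.trans hv)
        subst hv1
        obtain rfl : c = c' := by rw [hc] at hc'; exact Option.some.inj hc'
        rcases hy with hle | ⟨w, hw⟩ | ⟨w, c'', s', hc'', hw⟩
        · rw [hy'] at hle; exact absurd (R.g_range_A u true b₂) (by omega)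
        · exact absurd (hy'.symm.trans hw).symm R.gN_ne_gA
        · obtain ⟨hw1, hw2, hw3⟩ := R.gA_inj (hy'.symm.trans hw)
          subst hw1
          obtain rfl : c = c'' := by rw [hc] at hc''; exact Option.some.inj hc''
          rw [hx', hy', h5 u c b₁ b₂ hc]
          refine Or.inr (Or.inl ⟨u, ?_⟩)
          rw [val_node I u c hc]
          simp only [← hv2] at hv3
          simp only [← hw2] at hw3
          simp only [Bool.false_eq_true, if_false, if_true] at hv3 hw3
          rw [hv3, hw3]
  · rw [h6 x y hu]
    exact R.good_one

lemma good_of_generated (hT : R.Defines I T) {x : Fin R.m}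
    (hx : Generated T x) : R.GoodElt I x := by
  induction hx with
  | one h => exact R.good_one
  | app _ _ ihx ihy => exact R.good_closed hT ihx ihy

lemma gen_le_n (hT : R.Defines I T) : ∀ j (hj : j ≤ G.n),
    Generated T (R.el j (R.lt_m (by omega))) := by
  intro j
  induction j with
  | zero => exact fun _ => Generated.one R.m_pos
  | succ i ih =>
    intro hj
    have key := (hT.1 ⟨i, by omega⟩)
    have : Generated T (T (R.el 0 R.m_pos) (R.el i (R.lt_m (by omega)))) :=
      Generated.app (Generated.one R.m_pos) (ih (by omega))
    rw [key] at this
    exact this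

lemma gen_w (hT : R.Defines I T) : ∀ t (ht : t < R.l),
    Generated T (R.gN (R.w ⟨t, ht⟩) (G.val I (R.w ⟨t, ht⟩))) := by
  intro t
  induction t with
  | zero =>
    intro ht
    have : Generated T (T (R.el 0 R.m_pos) (R.el G.n (R.lt_m (by omega)))) :=
      Generated.app (Generated.one R.m_pos) (R.gen_le_n hT G.n le_rfl)
    rw [hT.2.1 ht] at this
    exact this
  | succ i ih =>
    intro ht
    have hi : i < R.l := by omega
    have : Generated T (T (R.el 0 R.m_pos)
        (R.gN (R.w ⟨i, by omega⟩) (G.val I (R.w ⟨i, hi⟩)))) :=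
      Generated.app (Generated.one R.m_pos) (ih hi)
    rw [hT.2.2.1 i ht (G.val I (R.w ⟨i, hi⟩))] at this
    exact this

lemma gen_val (hT : R.Defines I T) : ∀ u : Fin G.n,
    Generated T (R.gN u (G.val I u)) := by
  intro u
  induction u using WellFounded.induction G.wf with
  | _ u ih =>
    match hc : G.children u with
    | none =>
      obtain ⟨t, ht⟩ := R.w_surj u hc
      rw [← ht]
      exact R.gen_w hT t t.isLt
    | some c =>
      have h1 : Generated T (R.gA u false (G.val I c.1)) := by
        have : Generated T (T (R.el ((u : ℕ) + 1) (R.lt_m (by omega)))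
            (R.gN c.1 (G.val I c.1))) :=
          Generated.app (R.gen_le_n hT ((u : ℕ) + 1) (by omega))
            (ih c.1 ⟨c, hc, Or.inl rfl⟩)
        rwa [(hT.2.2.2.1 u c (G.val I c.1) hc).1] at this
      have h2 : Generated T (R.gA u true (G.val I c.2)) := by
        have : Generated T (T (R.el ((u : ℕ) + 1) (R.lt_m (by omega)))
            (R.gN c.2 (G.val I c.2))) :=
          Generated.app (R.gen_le_n hT ((u : ℕ) + 1) (by omega))
            (ih c.2 ⟨c, hc, Or.inr rfl⟩)
        rwa [(hT.2.2.2.1 u c (G.val I c.2) hc).2] at this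
      have := Generated.app h1 h2
      rw [hT.2.2.2.2.1 u c (G.val I c.1) (G.val I c.2) hc] at this
      rwa [val_node I u c hc]

lemma gen_arc (hT : R.Defines I T) (u : Fin G.n) (c : Fin G.n × Fin G.n)
    (s : Bool) (hc : G.children u = some c) :
    Generated T (R.gA u s (G.val I (if s then c.2 else c.1))) := by
  have hchild : Generated T (R.gN (if s then c.2 else c.1)
      (G.val I (if s then c.2 else c.1))) := R.gen_val hT _
  have : Generated T (T (R.el ((u : ℕ) + 1) (R.lt_m (by omega)))
      (R.gN (if s then c.2 else c.1) (G.val I (if s then c.2 else c.1)))) :=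
    Generated.app (R.gen_le_n hT ((u : ℕ) + 1) (by omega)) hchild
  cases s with
  | false =>
    simp only [Bool.false_eq_true, if_false] at this ⊢
    rwa [(hT.2.2.2.1 u c _ hc).1] at this
  | true =>
    simp only [if_true] at this ⊢
    rwa [(hT.2.2.2.1 u c _ hc).2] at this

end RedSetup

/-- In the reduction, for every input `I`, node `u` and `a ∈ [k]`, the element `gN u a`
("node `u` has value `a`") is generated by `T^I` iff `val(u)[I] = a`; and for every arc from
child `vᵢ` into `u`, the element `gA u side a` is generated iff `val(vᵢ)[I] = a`. -/
theorem stmt6 (G : BinDag) (k : ℕ) (R : RedSetup G k)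
    (I : G.Var k → Fin k) (T : Fin R.m → Fin R.m → Fin R.m) (hT : R.Defines I T) :
    (∀ (u : Fin G.n) (a : Fin k), Generated T (R.gN u a) ↔ G.val I u = a) ∧
    (∀ (u : Fin G.n) (c : Fin G.n × Fin G.n) (s : Bool) (a : Fin k),
      G.children u = some c →
        (Generated T (R.gA u s a) ↔ G.val I (if s then c.2 else c.1) = a)) := by
  constructor
  · intro u a
    constructor
    · intro h
      rcases R.good_of_generated hT h with hle | ⟨v, hv⟩ | ⟨v, c, s, hc, hv⟩
      · exact absurd hle (by have := R.g_range_N u a; omega)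
      · obtain ⟨rfl, h2⟩ := R.gN_inj hv
        exact h2.symm
      · exact absurd hv R.gN_ne_gA
    · intro h; rw [← h]; exact R.gen_val hT u
  · intro u c s a hc
    constructor
    · intro h
      rcases R.good_of_generated hT h with hle | ⟨v, hv⟩ | ⟨v, c', s', hc', hv⟩
      · exact absurd hle (by have := R.g_range_A u s a; omega)
      · exact absurd hv.symm R.gN_ne_gA
      · obtain ⟨rfl, rfl, h3⟩ := R.gA_inj hv
        obtain rfl : c = c' := by rw [hc] at hc'; exact Option.some.inj hc'
        exact h3.symm
    · intro h; rw [← h]; exact R.gen_arc hT u c s hc
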